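/- Let n ≥ 2 and let k be a positive integer. The set S = {N_n, N_{n+1}, …, N_{n+k-1}} of k consecutive n-nacci numbers satisfies CM(S) = ⌊(n−1)k/n⌋ + 1. -/

import Mathlib

/-- The Cookie Monster number of a finite set `S` of jar contents: the least `n`
for which there exist positive move amounts `a_1, …, a_n` such that every `s ∈ S`
is the sum of a subset of the move amounts. -/
noncomputable def CM (S : Finset ℕ) : ℕ :=
  sInf {n : ℕ | ∃ a : Fin n → ℕ, (∀ i, 0 < a i) ∧
    ∀ s ∈ S, ∃ I : Finset (Fin n), ∑ i ∈ I, a i = s}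

/-- The n-nacci sequence: `N i = 0` for `i < n - 1`, `N (n-1) = 1`, and each
subsequent term is the sum of the previous `n` terms. -/
def nnacci (n : ℕ) : ℕ → ℕ
  | i =>
    if i < n - 1 then 0
    else if _h : i = n - 1 then 1
    else ∑ j ∈ (Finset.range n).attach, nnacci n (i - n + j.1)
decreasing_by
  have hj := j.2
  simp only [Finset.mem_range] at hj
  omega



open Finset

lemma nnacci_zero {n i : ℕ} (h : i < n - 1) : nnacci n i = 0 := by
  rw [nnacci]; simp [h]

lemma nnacci_base {n : ℕ} : nnacci n (n - 1) = 1 := by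
  rw [nnacci]; simp

lemma nnacci_rec {n i : ℕ} (hn : 2 ≤ n) (h : n ≤ i) :
    nnacci n i = ∑ j ∈ Finset.range n, nnacci n (i - n + j) := by
  rw [nnacci]
  rw [if_neg (by omega), dif_neg (by omega)]
  exact Finset.sum_attach (Finset.range n) (fun j => nnacci n (i - n + j))

/-- shifted sequence -/
def nns (n j : ℕ) : ℕ := nnacci n (n + j)

lemma nns_rec (n : ℕ) (hn : 2 ≤ n) (j : ℕ) :
    nns n j = ∑ l ∈ Finset.range n, nnacci n (j + l) := by
  rw [nns, nnacci_rec hn (by omega)]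
  congr 1; ext l; congr 1; omega

lemma nns_Ico (n : ℕ) (hn : 2 ≤ n) (j : ℕ) :
    nns n j = ∑ i ∈ Finset.Ico j (j + n), nnacci n i := by
  rw [nns_rec n hn j, Finset.sum_Ico_eq_sum_range]
  have h : j + n - j = n := by omega
  rw [h]

lemma nns_high (n : ℕ) (hn : 2 ≤ n) (j : ℕ) :
    nns n (j + n) = ∑ i ∈ Finset.Ico j (j + n), nns n i := by
  rw [nns_Ico n hn, Finset.sum_Ico_eq_sum_range, Finset.sum_Ico_eq_sum_range]
  have h1 : j + n + n - (j + n) = n := by omega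
  have h2 : j + n - j = n := by omega
  rw [h1, h2]
  apply Finset.sum_congr rfl
  intro l hl
  show nnacci n (j + n + l) = nns n (j + l)
  rw [nns]; congr 1; omega

lemma nns_low (n : ℕ) (hn : 2 ≤ n) {j : ℕ} (hj : j < n) :
    nns n j = 1 + ∑ i ∈ Finset.range j, nns n i := by
  rw [nns_Ico n hn j]
  have hsplit : ∑ i ∈ Finset.Ico j (j + n), nnacci n i
      = (∑ i ∈ Finset.Ico j n, nnacci n i) + ∑ i ∈ Finset.Ico n (j + n), nnacci n i := by
    exact (Finset.sum_Ico_consecutive _ (by omega) (by omega)).symm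
  rw [hsplit]
  have h1 : ∑ i ∈ Finset.Ico j n, nnacci n i = 1 := by
    rw [Finset.sum_eq_single_of_mem (n - 1) (Finset.mem_Ico.mpr ⟨by omega, by omega⟩)
      (fun i hi hne => by
        simp only [Finset.mem_Ico] at hi
        exact nnacci_zero (by omega))]
    exact nnacci_base
  have h2 : ∑ i ∈ Finset.Ico n (j + n), nnacci n i = ∑ i ∈ Finset.range j, nns n i := by
    rw [Finset.sum_Ico_eq_sum_range]
    have : j + n - n = j := by omega
    rw [this]
    apply Finset.sum_congr rfl
    intro l _
    rw [nns]
  rw [h1, h2]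

lemma nns_pos (n : ℕ) (hn : 2 ≤ n) (j : ℕ) : 0 < nns n j := by
  induction j using Nat.strong_induction_on with
  | _ j ih =>
    rcases lt_or_ge j n with h | h
    · rw [nns_low n hn h]; omega
    · obtain ⟨m, rfl⟩ : ∃ m, j = m + n := ⟨j - n, by omega⟩
      rw [nns_high n hn m]
      have hm : m ∈ Finset.Ico m (m + n) := by simp; omega
      have := ih m (by omega)
      calc 0 < nns n m := this
        _ ≤ _ := Finset.single_le_sum (fun i _ => Nat.zero_le _) hm

lemma nns_mono (n : ℕ) (hn : 2 ≤ n) : ∀ j i, i ≤ j → nns n i ≤ nns n j := by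
  intro j
  induction j using Nat.strong_induction_on with
  | _ j ih =>
    intro i hij
    rcases eq_or_lt_of_le hij with rfl | hlt
    · exact le_refl _
    rcases lt_or_ge j n with h | h
    · rw [nns_low n hn h]
      have : nns n i ≤ ∑ l ∈ Finset.range j, nns n l :=
        Finset.single_le_sum (fun l _ => Nat.zero_le _) (Finset.mem_range.mpr hlt)
      omega
    · obtain ⟨m, rfl⟩ : ∃ m, j = m + n := ⟨j - n, by omega⟩
      rw [nns_high n hn m]
      rcases le_or_gt m i with hmi | him
      · exact Finset.single_le_sum (fun l _ => Nat.zero_le _)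
          (Finset.mem_Ico.mpr ⟨hmi, hlt⟩)
      · calc nns n i ≤ nns n m := ih m (by omega) i (le_of_lt him)
          _ ≤ _ := Finset.single_le_sum (fun l _ => Nat.zero_le _)
              (Finset.mem_Ico.mpr ⟨le_refl m, by omega⟩)

lemma nns_tele (n : ℕ) (hn : 2 ≤ n) : ∀ c : ℕ,
    ∑ l ∈ Finset.Icc 1 c, nns n (l * n) = ∑ j ∈ Finset.range (c * n), nns n j := by
  intro c
  induction c with
  | zero => simp
  | succ c ih =>
    have h1 : (c + 1) * n = c * n + n := by ring
    have h2 : ∑ j ∈ Finset.range (c * n + n), nns n j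
        = ∑ j ∈ Finset.range (c * n), nns n j + ∑ i ∈ Finset.Ico (c * n) (c * n + n), nns n i := by
      rw [Finset.range_eq_Ico, Finset.range_eq_Ico]
      exact (Finset.sum_Ico_consecutive (nns n) (m := 0) (n := c * n) (k := c * n + n) (by omega) (by omega)).symm
    rw [← Finset.Ico_add_one_right_eq_Icc, Finset.sum_Ico_succ_top (by omega), Finset.Ico_add_one_right_eq_Icc, ih,
      h1, h2, nns_high n hn (c * n)]

/-! ### Upper bound construction -/

def Amt (n c : ℕ) : Finset ℕ := (Finset.range c).filter (fun j => j = 0 ∨ ¬ (n ∣ j))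

lemma not_dvd_between {n q j : ℕ} (h1 : q * n < j) (h2 : j < (q + 1) * n) : ¬ n ∣ j := by
  rintro ⟨c, rfl⟩
  have hq : q < c := by
    have : n * q < n * c := by rw [mul_comm n q]; exact h1
    exact Nat.lt_of_mul_lt_mul_left this
  have hc : c < q + 1 := by
    have : n * c < n * (q + 1) := by rw [mul_comm n (q + 1)]; exact h2
    exact Nat.lt_of_mul_lt_mul_left this
  omega

lemma Amt_first {n : ℕ} (hn : 2 ≤ n) : Amt n n = Finset.range n := by
  ext j
  simp only [Amt, Finset.mem_filter, Finset.mem_range, and_iff_left_iff_imp]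
  intro hj
  rcases Nat.eq_zero_or_pos j with h0 | h0
  · exact Or.inl h0
  · exact Or.inr (fun hd => absurd (Nat.le_of_dvd h0 hd) (by omega))

lemma Amt_sum {n : ℕ} (hn : 2 ≤ n) : ∀ q, 1 ≤ q →
    ∑ i ∈ Amt n (q * n), nns n i = nns n (q * n) := by
  intro q hq
  induction q with
  | zero => omega
  | succ q ih =>
    rcases Nat.eq_zero_or_pos q with rfl | hq1
    · -- q + 1 = 1
      have h01 : (0 + 1) * n = n := by ring
      rw [h01, Amt_first hn]
      have := nns_high n hn 0
      simpa using this.symm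
    · have hsplit : Amt n ((q + 1) * n)
          = Amt n (q * n) ∪ Finset.Ico (q * n + 1) ((q + 1) * n) := by
        ext j
        simp only [Amt, Finset.mem_filter, Finset.mem_range, Finset.mem_union, Finset.mem_Ico]
        constructor
        · rintro ⟨hj, hcase⟩
          rcases lt_or_ge j (q * n) with h | h
          · exact Or.inl ⟨h, hcase⟩
          · refine Or.inr ⟨?_, hj⟩
            rcases Nat.eq_or_lt_of_le h with rfl | h'
            · exfalso
              rcases hcase with h0 | hnd
              · have : 0 < q * n := Nat.mul_pos hq1 (by omega)
                omega
              · exact hnd ⟨q, mul_comm q n⟩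
            · omega
        · rintro (⟨hj, hcase⟩ | ⟨h1, h2⟩)
          · refine ⟨?_, hcase⟩
            have : q * n < (q + 1) * n := by
              have : 0 < n := by omega
              nlinarith
            omega
          · exact ⟨h2, Or.inr (not_dvd_between (by omega) h2)⟩
      have hdisj : Disjoint (Amt n (q * n)) (Finset.Ico (q * n + 1) ((q + 1) * n)) := by
        rw [Finset.disjoint_left]
        intro j hj hj'
        simp only [Amt, Finset.mem_filter, Finset.mem_range] at hj
        simp only [Finset.mem_Ico] at hj'
        omega
      rw [hsplit, Finset.sum_union hdisj, ih hq1]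
      have hq1n : (q + 1) * n = q * n + n := by ring
      have hbot : ∑ i ∈ Finset.Ico (q * n) (q * n + n), nns n i
          = nns n (q * n) + ∑ i ∈ Finset.Ico (q * n + 1) (q * n + n), nns n i :=
        Finset.sum_eq_sum_Ico_succ_bot (by omega) _
      rw [hq1n, nns_high n hn (q * n), hbot]

lemma Amt_card {n k : ℕ} (hn : 2 ≤ n) (hk : 0 < k) :
    (Amt n k).card = k - (k - 1) / n := by
  have hcompl := Finset.card_filter_add_card_filter_not
    (s := Finset.range k) (p := fun j => j = 0 ∨ ¬ (n ∣ j))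
  have hmult : ((Finset.range k).filter (fun j => ¬(j = 0 ∨ ¬ (n ∣ j)))).card
      = (k - 1) / n := by
    rw [← Nat.Ioc_filter_dvd_card_eq_div (k - 1) n]
    congr 1
    ext j
    simp only [Finset.mem_filter, Finset.mem_range, Finset.mem_Ioc, not_or, not_not]
    constructor
    · rintro ⟨h1, h2, h3⟩
      exact ⟨⟨by omega, by omega⟩, h3⟩
    · rintro ⟨⟨h1, h2⟩, h3⟩
      exact ⟨by omega, by omega, h3⟩
  have hcard : (Finset.range k).card = k := Finset.card_range k
  rw [Amt] at *
  omega

/-- every element is a subset sum of the amounts -/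
lemma Amt_repr {n k : ℕ} (hn : 2 ≤ n) (hk : 0 < k) :
    ∀ j < k, ∃ J : Finset ℕ, J ⊆ Amt n k ∧ ∑ i ∈ J, nns n i = nns n j := by
  intro j hj
  by_cases hA : j = 0 ∨ ¬ (n ∣ j)
  · refine ⟨{j}, ?_, by simp⟩
    intro x hx
    simp only [Finset.mem_singleton] at hx
    subst hx
    simp only [Amt, Finset.mem_filter, Finset.mem_range]
    exact ⟨hj, hA⟩
  · push_neg at hA
    obtain ⟨hj0, q, rfl⟩ : j ≠ 0 ∧ ∃ q, j = n * q := ⟨hA.1, hA.2⟩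
    have hq1 : 1 ≤ q := by
      rcases Nat.eq_zero_or_pos q with rfl | h
      · simp at hj0
      · exact h
    refine ⟨Amt n (q * n), ?_, by rw [Amt_sum hn q hq1, mul_comm]⟩
    intro x hx
    simp only [Amt, Finset.mem_filter, Finset.mem_range] at hx ⊢
    have hcm : n * q = q * n := mul_comm n q
    exact ⟨by omega, hx.2⟩

/-! ### Lower bound -/

lemma sorted_sum (n : ℕ) (hn : 2 ≤ n) : ∀ c (T : Finset ℕ), T.card = c →
    (∀ x ∈ T, n * ((T.filter (· < x)).card + 1) ≤ x) →
    ∑ j ∈ Finset.range (c * n), nns n j ≤ ∑ x ∈ T, nns n x := by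
  intro c
  induction c with
  | zero => intro T hT h; simp
  | succ c ih =>
    intro T hT h
    have hne : T.Nonempty := by rw [← Finset.card_pos, hT]; omega
    set x := T.max' hne with hxdef
    have hxT : x ∈ T := T.max'_mem hne
    have hfilt : T.filter (· < x) = T.erase x := by
      ext y
      simp only [Finset.mem_filter, Finset.mem_erase]
      constructor
      · rintro ⟨hy, hlt⟩; exact ⟨by omega, hy⟩
      · rintro ⟨hne', hy⟩
        exact ⟨hy, lt_of_le_of_ne (T.le_max' y hy) hne'⟩
    have hcard : (T.erase x).card = c := by
      rw [Finset.card_erase_of_mem hxT, hT]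
      omega
    have hx_ge : n * (c + 1) ≤ x := by
      have := h x hxT
      rwa [hfilt, hcard] at this
    have hT' : ∀ y ∈ T.erase x, n * (((T.erase x).filter (· < y)).card + 1) ≤ y := by
      intro y hy
      have hyT : y ∈ T := Finset.mem_of_mem_erase hy
      have heq : (T.erase x).filter (· < y) = T.filter (· < y) := by
        ext z
        simp only [Finset.mem_filter, Finset.mem_erase]
        have hyx : y < x := lt_of_le_of_ne (T.le_max' y hyT) (Finset.ne_of_mem_erase hy)
        constructor
        · rintro ⟨⟨_, hz⟩, h2⟩; exact ⟨hz, h2⟩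
        · rintro ⟨hz, h2⟩; exact ⟨⟨by omega, hz⟩, h2⟩
      rw [heq]; exact h y hyT
    have hsum := ih (T.erase x) hcard hT'
    have hsplit : ∑ j ∈ Finset.range ((c + 1) * n), nns n j
        = ∑ j ∈ Finset.range (c * n), nns n j + nns n (c * n + n) := by
      have h1 : (c + 1) * n = c * n + n := by ring
      have h2 : ∑ j ∈ Finset.range (c * n + n), nns n j
          = ∑ j ∈ Finset.range (c * n), nns n j + ∑ i ∈ Finset.Ico (c * n) (c * n + n), nns n i := by
        rw [Finset.range_eq_Ico, Finset.range_eq_Ico]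
        exact (Finset.sum_Ico_consecutive (nns n) (m := 0) (n := c * n) (k := c * n + n) (by omega) (by omega)).symm
      rw [h1, h2, nns_high n hn (c * n)]
    have hTsum : ∑ y ∈ T, nns n y = nns n x + ∑ y ∈ T.erase x, nns n y :=
      (Finset.add_sum_erase T _ hxT).symm
    have hmono : nns n (c * n + n) ≤ nns n x := by
      apply nns_mono n hn x (c * n + n)
      have : n * (c + 1) = c * n + n := by ring
      omega
    omega

lemma lower_bound (n : ℕ) (hn : 2 ≤ n) (k : ℕ) (hk : 0 < k) (m : ℕ) (a : Fin m → ℕ)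
    (ha : ∀ i, 0 < a i)
    (hrep : ∀ j < k, ∃ I : Finset (Fin m), ∑ i ∈ I, a i = nns n j) :
    k - (k - 1) / n ≤ m := by
  classical
  have hrep' : ∀ j : ℕ, ∃ I : Finset (Fin m), j < k → ∑ i ∈ I, a i = nns n j := by
    intro j
    by_cases h : j < k
    · exact (hrep j h).imp (fun I hI _ => hI)
    · exact ⟨∅, fun h' => absurd h' h⟩
  choose I hI using hrep'
  set M : ℕ → Finset (Fin m) := fun t => (Finset.range t).biUnion I with hMdef
  set F : Finset ℕ := (Finset.range k).filter (fun j => I j ⊆ M j) with hFdef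
  -- step bound
  have hstep : ∀ t, t ≤ k →
      (∑ x ∈ M t, a x) + ∑ j ∈ F.filter (· < t), nns n j ≤ ∑ j ∈ Finset.range t, nns n j := by
    intro t
    induction t with
    | zero => simp [hMdef]
    | succ t ih =>
      intro ht
      have ht' : t < k := by omega
      have iht := ih (by omega)
      have hM : M (t + 1) = I t ∪ M t := by
        rw [hMdef]
        simp only
        rw [Finset.range_add_one, Finset.biUnion_insert]
      by_cases hfree : I t ⊆ M t
      · have htF : t ∈ F := by
          rw [hFdef]
          exact Finset.mem_filter.mpr ⟨Finset.mem_range.mpr ht', hfree⟩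
        have hMeq : M (t + 1) = M t := by
          rw [hM, Finset.union_eq_right.mpr hfree]
        have hfilter : F.filter (· < t + 1) = insert t (F.filter (· < t)) := by
          ext j
          simp only [Finset.mem_filter, Finset.mem_insert]
          constructor
          · rintro ⟨hjF, hjt⟩
            rcases Nat.lt_succ_iff_lt_or_eq.mp hjt with h | rfl
            · exact Or.inr ⟨hjF, h⟩
            · exact Or.inl rfl
          · rintro (rfl | ⟨hjF, hjt⟩)
            · exact ⟨htF, by omega⟩
            · exact ⟨hjF, by omega⟩
        have htnot : t ∉ F.filter (· < t) := by
          simp only [Finset.mem_filter]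
          omega
        rw [hfilter, Finset.sum_insert htnot, hMeq, Finset.sum_range_succ]
        omega
      · have htF : t ∉ F := by
          rw [hFdef]
          simp only [Finset.mem_filter, Finset.mem_range]
          tauto
        have hfilter : F.filter (· < t + 1) = F.filter (· < t) := by
          ext j
          simp only [Finset.mem_filter]
          constructor
          · rintro ⟨hjF, hjt⟩
            rcases Nat.lt_succ_iff_lt_or_eq.mp hjt with h | rfl
            · exact ⟨hjF, h⟩
            · exact absurd hjF htF
          · rintro ⟨hjF, hjt⟩
            exact ⟨hjF, by omega⟩
        have hMsum : ∑ x ∈ M (t + 1), a x ≤ ∑ x ∈ M t, a x + ∑ x ∈ I t, a x := by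
          rw [hM]
          have heq : I t ∪ M t = M t ∪ (I t \ M t) := by
            rw [Finset.union_sdiff_self_eq_union, Finset.union_comm]
          rw [heq, Finset.sum_union Finset.disjoint_sdiff]
          have : ∑ x ∈ I t \ M t, a x ≤ ∑ x ∈ I t, a x :=
            Finset.sum_le_sum_of_subset (Finset.sdiff_subset)
          omega
        have hIt : ∑ x ∈ I t, a x = nns n t := hI t ht'
        rw [hfilter, Finset.sum_range_succ]
        omega
  -- key claim about free steps
  have hclaim : ∀ j, j ∈ F → n * ((F.filter (· < j)).card + 1) ≤ j := by
    intro j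
    induction j using Nat.strong_induction_on with
    | _ j ihj =>
      intro hjF
      by_contra hcon
      push_neg at hcon
      set T := F.filter (· < j) with hTdef
      have hjk : j < k := by
        have := Finset.mem_filter.mp hjF
        exact Finset.mem_range.mp this.1
      have hIj : I j ⊆ M j := (Finset.mem_filter.mp hjF).2
      have h1 : nns n j ≤ ∑ x ∈ M j, a x := by
        rw [← hI j hjk]
        exact Finset.sum_le_sum_of_subset hIj
      have h2 := hstep j (le_of_lt hjk)
      rw [← hTdef] at h2
      have hT : ∀ x ∈ T, n * ((T.filter (· < x)).card + 1) ≤ x := by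
        intro x hx
        obtain ⟨hxF, hxj⟩ := Finset.mem_filter.mp hx
        have hrec := ihj x hxj hxF
        have heq : T.filter (· < x) = F.filter (· < x) := by
          rw [hTdef, Finset.filter_filter]
          apply Finset.filter_congr
          intro z _
          constructor
          · exact fun h => h.2
          · exact fun h => ⟨lt_trans h hxj, h⟩
        rw [heq]
        exact hrec
      have hsorted := sorted_sum n hn T.card T rfl hT
      rcases Nat.eq_zero_or_pos T.card with hc0 | hc1
      · have hjn : j < n := by
          rw [hc0] at hcon
          omega
        have hlow := nns_low n hn hjn
        rw [hc0] at hsorted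
        simp only [Nat.zero_mul, Finset.range_zero, Finset.sum_empty] at hsorted
        have hTe : T = ∅ := Finset.card_eq_zero.mp hc0
        rw [hTe, Finset.sum_empty] at h2
        omega
      · set c := T.card with hcdef
        have hne : T.Nonempty := Finset.card_pos.mp hc1
        set x := T.max' hne with hxdef
        have hxT : x ∈ T := T.max'_mem hne
        have hxlt : x < j := (Finset.mem_filter.mp hxT).2
        have hfiltx : T.filter (· < x) = T.erase x := by
          ext y
          simp only [Finset.mem_filter, Finset.mem_erase]
          constructor
          · rintro ⟨hy, hlt⟩; exact ⟨by omega, hy⟩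
          · rintro ⟨hne', hy⟩
            exact ⟨hy, lt_of_le_of_ne (T.le_max' y hy) hne'⟩
        have hcerase : (T.erase x).card = c - 1 := by
          rw [Finset.card_erase_of_mem hxT]
        have hxge : n * c ≤ x := by
          have := hT x hxT
          rw [hfiltx, hcerase] at this
          have hc : c - 1 + 1 = c := by omega
          rwa [hc] at this
        have hncj : n * c < j := lt_of_le_of_lt hxge hxlt
        have hcm : n * c = c * n := mul_comm n c
        have hjn : n ≤ j := by
          have : n * 1 ≤ n * c := Nat.mul_le_mul_left n hc1
          omega
        have hjsplit : ∑ i ∈ Finset.range j, nns n i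
            = ∑ i ∈ Finset.range (c * n), nns n i + ∑ i ∈ Finset.Ico (c * n) j, nns n i := by
          rw [Finset.range_eq_Ico, Finset.range_eq_Ico]
          exact (Finset.sum_Ico_consecutive (nns n) (m := 0) (n := c * n) (k := j) (by omega) (by omega)).symm
        obtain ⟨p, rfl⟩ : ∃ p, j = p + n := ⟨j - n, by omega⟩
        have hhigh : nns n (p + n) = ∑ i ∈ Finset.Ico p (p + n), nns n i := nns_high n hn p
        have hcon' : p + n < n * (c + 1) := hcon
        have hnc1 : n * (c + 1) = n * c + n := by ring
        have hpcn : p < c * n := by omega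
        have hbot : ∑ i ∈ Finset.Ico p (p + n), nns n i
            = nns n p + ∑ i ∈ Finset.Ico (p + 1) (p + n), nns n i :=
          Finset.sum_eq_sum_Ico_succ_bot (by omega) _
        have hsub : ∑ i ∈ Finset.Ico (c * n) (p + n), nns n i
            ≤ ∑ i ∈ Finset.Ico (p + 1) (p + n), nns n i := by
          apply Finset.sum_le_sum_of_subset
          intro z hz
          simp only [Finset.mem_Ico] at hz ⊢
          omega
        have hppos := nns_pos n hn p
        omega
  -- bound on number of free steps
  have hFcard : F.card * n ≤ k - 1 ∨ F.card = 0 := by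
    rcases Finset.eq_empty_or_nonempty F with hFe | hFne
    · right; rw [hFe]; simp
    · left
      set x := F.max' hFne with hxdef
      have hxF : x ∈ F := F.max'_mem hFne
      have hxk : x < k := by
        have := Finset.mem_filter.mp hxF
        exact Finset.mem_range.mp this.1
      have hfiltx : F.filter (· < x) = F.erase x := by
        ext y
        simp only [Finset.mem_filter, Finset.mem_erase]
        constructor
        · rintro ⟨hy, hlt⟩; exact ⟨by omega, hy⟩
        · rintro ⟨hne', hy⟩
          exact ⟨hy, lt_of_le_of_ne (F.le_max' y hy) hne'⟩
      have := hclaim x hxF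
      rw [hfiltx, Finset.card_erase_of_mem hxF] at this
      have hc : F.card - 1 + 1 = F.card := by
        have : 0 < F.card := Finset.card_pos.mpr hFne
        omega
      rw [hc] at this
      have hcm : n * F.card = F.card * n := mul_comm n F.card
      omega
  have hFle : F.card ≤ (k - 1) / n := by
    rcases hFcard with h | h
    · exact Nat.le_div_iff_mul_le (by omega) |>.mpr h
    · rw [h]; exact Nat.zero_le _
  -- injection from non-free steps into Fin m
  haveI : Nonempty (Fin m) := by
    obtain ⟨I0, hI0⟩ := hrep 0 hk
    have hpos := nns_pos n hn 0
    rcases Finset.eq_empty_or_nonempty I0 with rfl | ⟨i, _⟩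
    · simp at hI0; omega
    · exact ⟨i⟩
  set NF : Finset ℕ := (Finset.range k).filter (fun j => ¬ I j ⊆ M j) with hNFdef
  have hcards : F.card + NF.card = k := by
    have := Finset.card_filter_add_card_filter_not
      (s := Finset.range k) (p := fun j => I j ⊆ M j)
    rw [Finset.card_range] at this
    exact this
  have hg : ∀ j ∈ NF, (I j \ M j).Nonempty := by
    intro j hj
    have := (Finset.mem_filter.mp hj).2
    exact Finset.sdiff_nonempty.mpr this
  set g : ℕ → Fin m := fun j =>
    if h : (I j \ M j).Nonempty then h.choose else Classical.arbitrary (Fin m) with hgdef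
  have hgmem : ∀ j ∈ NF, g j ∈ I j \ M j := by
    intro j hj
    have h := hg j hj
    simp only [hgdef, dif_pos h]
    exact h.choose_spec
  have hNFm : NF.card ≤ m := by
    have := Finset.card_le_card_of_injOn (s := NF) (t := Finset.univ) g
      (fun j _ => Finset.mem_univ (g j)) ?_
    · rwa [Finset.card_univ, Fintype.card_fin] at this
    · intro j hj j' hj' heq
      simp only [Finset.mem_coe] at hj hj'
      by_contra hne
      have key : ∀ b b', b ∈ NF → b' ∈ NF → b < b' → g b ≠ g b' := by
        intro b b' hb hb' hlt
        have h1 : g b ∈ I b := (Finset.mem_sdiff.mp (hgmem b hb)).1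
        have h2 : g b' ∉ M b' := (Finset.mem_sdiff.mp (hgmem b' hb')).2
        intro hgeq
        apply h2
        rw [← hgeq]
        have : I b ⊆ M b' := by
          apply Finset.subset_biUnion_of_mem I (Finset.mem_range.mpr hlt)
        exact this h1
      rcases lt_trichotomy j j' with h | h | h
      · exact key j j' hj hj' h heq
      · exact hne h
      · exact key j' j hj' hj h heq.symm
  calc k - (k - 1) / n ≤ k - F.card := Nat.sub_le_sub_left hFle k
    _ = NF.card := by omega
    _ ≤ m := hNFm

lemma arith (n k : ℕ) (hn : 2 ≤ n) (hk : 0 < k) :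
    k - (k - 1) / n = (n - 1) * k / n + 1 := by
  obtain ⟨q, r, hqr, hr⟩ : ∃ q r, k - 1 = n * q + r ∧ r < n :=
    ⟨(k - 1) / n, (k - 1) % n, (Nat.div_add_mod (k - 1) n).symm, Nat.mod_lt _ (by omega)⟩
  have hq : (k - 1) / n = q := by
    rw [hqr, Nat.mul_add_div (by omega), Nat.div_eq_of_lt hr, add_zero]
  obtain ⟨d, hd⟩ : ∃ d, r + d + 1 = n := ⟨n - r - 1, by omega⟩
  subst hd
  have hk' : k = (r + d + 1) * q + r + 1 := by omega
  have key : (r + d + 1 - 1) * k = (r + d + 1) * (q * (r + d) + r) + d := by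
    have h1 : r + d + 1 - 1 = r + d := by omega
    rw [h1, hk']
    ring
  rw [key, Nat.mul_add_div (show 0 < r + d + 1 by omega),
    Nat.div_eq_of_lt (show d < r + d + 1 by omega), add_zero, hq]
  have h2 : q * (r + d) + q = (r + d + 1) * q := by ring
  omega

/-! ### Main theorem assembly -/

lemma upper_mem (n : ℕ) (hn : 2 ≤ n) (k : ℕ) (hk : 0 < k) :
    (Amt n k).card ∈ {m : ℕ | ∃ a : Fin m → ℕ, (∀ i, 0 < a i) ∧
      ∀ s ∈ (Finset.Icc n (n + k - 1)).image (nnacci n),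
        ∃ I : Finset (Fin m), ∑ i ∈ I, a i = s} := by
  classical
  set A := Amt n k with hA
  set e := A.orderIsoOfFin rfl with he
  refine ⟨fun i => nns n ((e i : ℕ)), fun i => nns_pos n hn _, ?_⟩
  intro s hs
  obtain ⟨i, hi, rfl⟩ := Finset.mem_image.mp hs
  simp only [Finset.mem_Icc] at hi
  have hj : i - n < k := by omega
  have hval : nns n (i - n) = nnacci n i := by
    rw [nns]; congr 1; omega
  obtain ⟨J, hJsub, hJsum⟩ := Amt_repr hn hk (i - n) hj
  refine ⟨J.attach.image (fun x => e.symm ⟨x.1, hJsub x.2⟩), ?_⟩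
  rw [Finset.sum_image ?hinj]
  case hinj =>
    intro x _ y _ hxy
    have h1 := e.symm.injective hxy
    have h2 : x.1 = y.1 := Subtype.mk_eq_mk.mp h1
    exact Subtype.ext h2
  have : ∀ x ∈ J.attach, nns n ((e (e.symm ⟨x.1, hJsub x.2⟩) : ℕ)) = nns n x.1 := by
    intro x _
    rw [OrderIso.apply_symm_apply]
  rw [Finset.sum_congr rfl this, Finset.sum_attach J (fun x => nns n x), hJsum, hval]

/-- For the set `{N_n, N_{n+1}, …, N_{n+k-1}}` of `k` consecutive n-nacci numbers,
`CM(S) = ⌊(n−1)k/n⌋ + 1`. -/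
theorem cm_nnacci (n : ℕ) (hn : 2 ≤ n) (k : ℕ) (hk : 0 < k) :
    CM ((Finset.Icc n (n + k - 1)).image (nnacci n)) = (n - 1) * k / n + 1 := by
  rw [← arith n k hn hk, CM]
  have hmem := upper_mem n hn k hk
  apply le_antisymm
  · have := Nat.sInf_le hmem
    rwa [Amt_card hn hk] at this
  · apply le_csInf ⟨_, hmem⟩
    rintro m ⟨a, ha, hrep⟩
    apply lower_bound n hn k hk m a ha
    intro j hj
    apply hrep
    rw [Finset.mem_image]
    exact ⟨n + j, Finset.mem_Icc.mpr ⟨by omega, by omega⟩, rfl⟩
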